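/- Let p be in the complex Shearer region and let (S,u) be a node of the computation tree with children C(S,u). Let R_c be any complex numbers with |R_c| ≤ ϱ_c for each child c, and R_{S,u} = p_u ∏_{c∈C(S,u)} (1 - R_c)^{-1}. Then |r_{S,u} - R_{S,u}| ≤ ϱ_{S,u} Σ_{c∈C(S,u)} |r_c - R_c|/(1 - ϱ_c). -/

import Mathlib

open Finset

/-- alternating-sign independence polynomial over ℂ -/
noncomputable def qbar {V : Type*} [DecidableEq V] (G : SimpleGraph V) [DecidableRel G.Adj]
    (p : V → ℂ) (S : Finset V) : ℂ :=
  ∑ I ∈ S.powerset.filter (fun I => ∀ u ∈ I, ∀ v ∈ I, ¬ G.Adj u v),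
    (-1 : ℂ) ^ I.card * ∏ v ∈ I, p v

/-- alternating-sign independence polynomial over ℝ -/
def qbarR {V : Type*} [DecidableEq V] (G : SimpleGraph V) [DecidableRel G.Adj]
    (p : V → ℝ) (S : Finset V) : ℝ :=
  ∑ I ∈ S.powerset.filter (fun I => ∀ u ∈ I, ∀ v ∈ I, ¬ G.Adj u v),
    (-1 : ℝ) ^ I.card * ∏ v ∈ I, p v

/-- complex occupation ratio -/
noncomputable def occ {V : Type*} [DecidableEq V] (G : SimpleGraph V) [DecidableRel G.Adj]
    (p : V → ℂ) (S : Finset V) (u : V) : ℂ :=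
  1 - qbar G p S / qbar G p (S.erase u)

/-- real occupation ratio -/
noncomputable def occR {V : Type*} [DecidableEq V] (G : SimpleGraph V) [DecidableRel G.Adj]
    (p : V → ℝ) (S : Finset V) (u : V) : ℝ :=
  1 - qbarR G p S / qbarR G p (S.erase u)

/-- `ϱ_{S,u}(p) = r_{S,u}(|p|)` -/
noncomputable def rho {V : Type*} [DecidableEq V] (G : SimpleGraph V) [DecidableRel G.Adj]
    (p : V → ℂ) (S : Finset V) (u : V) : ℝ :=
  occR G (fun v => ‖p v‖) S u

/-- the multivariate independence polynomial `Z_G(z)` -/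
noncomputable def ZG {V : Type*} [Fintype V] [DecidableEq V] (G : SimpleGraph V)
    [DecidableRel G.Adj] (z : V → ℂ) : ℂ :=
  ∑ I ∈ Finset.univ.powerset.filter (fun I => ∀ u ∈ I, ∀ v ∈ I, ¬ G.Adj u v),
    ∏ v ∈ I, z v

set_option maxRecDepth 8000

def indSets {V : Type*} [DecidableEq V] (G : SimpleGraph V) [DecidableRel G.Adj]
    (S : Finset V) : Finset (Finset V) :=
  S.powerset.filter (fun I => ∀ u ∈ I, ∀ v ∈ I, ¬ G.Adj u v)

lemma mem_indSets {V : Type*} [DecidableEq V] {G : SimpleGraph V} [DecidableRel G.Adj]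
    {S : Finset V} {I : Finset V} :
    I ∈ indSets G S ↔ I ⊆ S ∧ ∀ u ∈ I, ∀ v ∈ I, ¬ G.Adj u v := by
  simp [indSets]

noncomputable def gq {V : Type*} [DecidableEq V] (K : Type*) [Field K] (G : SimpleGraph V)
    [DecidableRel G.Adj] (p : V → K) (S : Finset V) : K :=
  ∑ I ∈ indSets G S, (-1 : K) ^ I.card * ∏ v ∈ I, p v

lemma gq_rec {V : Type*} [Fintype V] [DecidableEq V] {K : Type*} [Field K] (G : SimpleGraph V)
    [DecidableRel G.Adj] (p : V → K) (S : Finset V) (u : V) (hu : u ∈ S) :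
    gq K G p S = gq K G p (S.erase u) - p u * gq K G p ((S.erase u) \ G.neighborFinset u) := by
  unfold gq
  rw [← Finset.sum_filter_add_sum_filter_not (p := fun I => u ∉ I) (indSets G S)
    (fun I => (-1 : K) ^ I.card * ∏ v ∈ I, p v)]
  have h1 : (indSets G S).filter (fun I => u ∉ I) = indSets G (S.erase u) := by
    ext I
    simp only [Finset.mem_filter, mem_indSets, Finset.subset_erase]
    tauto
  rw [h1]
  have h2 : ∑ I ∈ (indSets G S).filter (fun I => ¬ u ∉ I), (-1 : K) ^ I.card * ∏ v ∈ I, p v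
      = ∑ J ∈ indSets G ((S.erase u) \ G.neighborFinset u),
        (-(p u)) * ((-1 : K) ^ J.card * ∏ v ∈ J, p v) := by
    apply Finset.sum_nbij' (i := fun I => I.erase u) (j := fun J => insert u J)
    · intro I hI
      simp only [Finset.mem_filter, mem_indSets, not_not] at hI
      obtain ⟨⟨hIS, hind⟩, huI⟩ := hI
      simp only [mem_indSets]
      refine ⟨?_, fun a ha b hb => hind a (Finset.mem_of_mem_erase ha) b (Finset.mem_of_mem_erase hb)⟩
      intro a ha
      have haI := Finset.mem_of_mem_erase ha
      have hau := Finset.ne_of_mem_erase ha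
      simp only [Finset.mem_sdiff, Finset.mem_erase, SimpleGraph.mem_neighborFinset]
      exact ⟨⟨hau, hIS haI⟩, hind u huI a haI⟩
    · intro J hJ
      simp only [mem_indSets] at hJ
      obtain ⟨hJS, hind⟩ := hJ
      have huJ : u ∉ J := fun h => (Finset.mem_erase.mp ((Finset.mem_sdiff.mp (hJS h)).1)).1 rfl
      simp only [Finset.mem_filter, mem_indSets, not_not]
      refine ⟨⟨?_, ?_⟩, Finset.mem_insert_self u J⟩
      · intro a ha
        rcases Finset.mem_insert.mp ha with rfl | ha
        · exact hu
        · exact Finset.mem_of_mem_erase (Finset.mem_sdiff.mp (hJS ha)).1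
      · intro a ha b hb h
        rcases Finset.mem_insert.mp ha with ha' | ha'
        · subst ha'
          rcases Finset.mem_insert.mp hb with hb' | hb'
          · exact G.irrefl (hb' ▸ h)
          · exact (Finset.mem_sdiff.mp (hJS hb')).2 ((SimpleGraph.mem_neighborFinset ..).mpr h)
        · rcases Finset.mem_insert.mp hb with hb' | hb'
          · subst hb'
            exact (Finset.mem_sdiff.mp (hJS ha')).2 ((SimpleGraph.mem_neighborFinset ..).mpr h.symm)
          · exact hind a ha' b hb' h
    · intro I hI
      simp only [Finset.mem_filter, not_not] at hI
      exact Finset.insert_erase hI.2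
    · intro J hJ
      simp only [mem_indSets] at hJ
      have huJ : u ∉ J := fun h => (Finset.mem_erase.mp ((Finset.mem_sdiff.mp (hJ.1 h)).1)).1 rfl
      exact Finset.erase_insert huJ
    · intro I hI
      simp only [Finset.mem_filter, not_not] at hI
      have huI := hI.2
      have h1c : 0 < I.card := Finset.card_pos.mpr ⟨u, huI⟩
      have hcard : I.card = (I.erase u).card + 1 := by
        rw [Finset.card_erase_of_mem huI]
        omega
      have hprod : ∏ v ∈ I, p v = p u * ∏ v ∈ I.erase u, p v :=
        (Finset.mul_prod_erase I p huI).symm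
      rw [hcard, hprod]
      ring
  rw [h2, ← Finset.mul_sum]
  ring

lemma prod_div_telescope {K : Type*} [Field K] (f : ℕ → K) (hf : ∀ i, f i ≠ 0) (n : ℕ) :
    ∏ i ∈ Finset.range n, f i / f (i + 1) = f 0 / f n := by
  induction n with
  | zero => simp [div_self (hf 0)]
  | succ n ih =>
    rw [Finset.prod_range_succ, ih, div_mul_div_comm, mul_comm (f 0) (f n),
      mul_div_mul_left _ _ (hf n)]

lemma gq_chain {V : Type*} [Fintype V] [DecidableEq V] {K : Type*} [Field K] (G : SimpleGraph V)
    [DecidableRel G.Adj] (p : V → K) (S : Finset V) (u : V) (hu : u ∈ S)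
    (l : List V) (hnodup : l.Nodup) (hl : l.toFinset = S ∩ G.neighborFinset u)
    (hq : ∀ T, T ⊆ S → gq K G p T ≠ 0) :
    1 - gq K G p S / gq K G p (S.erase u)
      = p u * ∏ i : Fin l.length,
          gq K G p (((S.erase u) \ (l.take i).toFinset).erase (l.get i))
            / gq K G p ((S.erase u) \ (l.take i).toFinset) := by
  set n := l.length with hn
  set g : ℕ → K := fun k => gq K G p ((S.erase u) \ (l.take k).toFinset) with hgdef
  have hsub : ∀ k : ℕ, (S.erase u) \ (l.take k).toFinset ⊆ S :=
    fun k => Finset.sdiff_subset.trans (Finset.erase_subset u S)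
  have hg0 : ∀ k, g k ≠ 0 := fun k => hq _ (hsub k)
  have hmem : ∀ i : Fin n, l.get i ∈ (S.erase u) \ (l.take i).toFinset := by
    intro i
    have h1 : l.get i ∈ l.toFinset := List.mem_toFinset.mpr (l.get_mem ..)
    rw [hl, Finset.mem_inter, SimpleGraph.mem_neighborFinset] at h1
    have hne : l.get i ≠ u := fun h => G.irrefl (h ▸ h1.2)
    have h2 : l.get i ∉ (l.take i).toFinset := by
      rw [List.mem_toFinset]
      intro hmem2
      have hd : l.get i ∈ l.drop (i : ℕ) := by
        rw [← List.cons_get_drop_succ (l := l) (n := i)]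
        exact List.mem_cons_self
      exact (List.disjoint_take_drop hnodup (le_refl (i : ℕ))) hmem2 hd
    exact Finset.mem_sdiff.mpr ⟨Finset.mem_erase.mpr ⟨hne, h1.1⟩, h2⟩
  have hstep : ∀ i : Fin n, ((S.erase u) \ (l.take i).toFinset).erase (l.get i)
      = (S.erase u) \ (l.take ((i : ℕ) + 1)).toFinset := by
    intro i
    have ht : l.take ((i : ℕ) + 1) = l.take i ++ [l.get i] := by
      rw [List.take_succ]
      congr 1
      rw [List.getElem?_eq_getElem i.isLt]
      simp [List.get_eq_getElem]
    ext a
    simp only [Finset.mem_erase, Finset.mem_sdiff, ht, List.toFinset_append, Finset.mem_union,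
      List.toFinset_cons, List.toFinset_nil, LawfulSingleton.insert_empty_eq, Finset.mem_singleton,
      List.mem_toFinset]
    tauto
  have hlast : (S.erase u) \ (l.take n).toFinset = (S.erase u) \ G.neighborFinset u := by
    rw [hn, List.take_length, hl]
    ext a
    simp only [Finset.mem_sdiff, Finset.mem_inter, Finset.mem_erase]
    tauto
  have hprod : ∏ i : Fin n, gq K G p (((S.erase u) \ (l.take i).toFinset).erase (l.get i))
        / gq K G p ((S.erase u) \ (l.take i).toFinset)
      = g n / g 0 := by
    have e1 : ∀ i : Fin n, gq K G p (((S.erase u) \ (l.take i).toFinset).erase (l.get i))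
        / gq K G p ((S.erase u) \ (l.take i).toFinset) = g ((i : ℕ) + 1) / g i := by
      intro i
      rw [hstep i]
    rw [Finset.prod_congr rfl (fun i _ => e1 i), Fin.prod_univ_eq_prod_range (fun i => g (i+1) / g i) n]
    have : ∀ i ∈ Finset.range n, g (i + 1) / g i = (g i / g (i + 1))⁻¹ := by
      intro i _
      rw [inv_div]
    rw [Finset.prod_congr rfl this, Finset.prod_inv_distrib, prod_div_telescope g hg0 n, inv_div]
  rw [hprod]
  have hrec := gq_rec G p S u hu
  have hg0eq : g 0 = gq K G p (S.erase u) := by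
    simp [hgdef]
  have hgneq : g n = gq K G p ((S.erase u) \ G.neighborFinset u) := by
    rw [hgdef]
    simp only
    rw [hlast]
  rw [hrec, ← hg0eq, ← hgneq]
  rw [sub_div, div_self (hg0 0), mul_div_assoc]
  ring

lemma gq_ne_zero {V : Type*} [Fintype V] [DecidableEq V] (G : SimpleGraph V)
    [DecidableRel G.Adj] (p : V → ℂ)
    (hShearer : ∀ z : V → ℂ, (∀ v, ‖z v‖ ≤ ‖p v‖) → ZG G z ≠ 0)
    (p' : V → ℂ) (hp' : ∀ v, ‖p' v‖ ≤ ‖p v‖) (T : Finset V) :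
    gq ℂ G p' T ≠ 0 := by
  set z : V → ℂ := fun v => if v ∈ T then -p' v else 0 with hz
  have h1 : ZG G z = gq ℂ G p' T := by
    unfold ZG gq
    have hsub : indSets G T ⊆ Finset.univ.powerset.filter (fun I => ∀ u ∈ I, ∀ v ∈ I, ¬ G.Adj u v) := by
      intro I hI
      rw [mem_indSets] at hI
      simp only [Finset.mem_filter, Finset.mem_powerset]
      exact ⟨Finset.subset_univ I, hI.2⟩
    have hzero : ∀ I ∈ Finset.univ.powerset.filter (fun I => ∀ u ∈ I, ∀ v ∈ I, ¬ G.Adj u v),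
        I ∉ indSets G T → ∏ v ∈ I, z v = 0 := by
      intro I hI hIT
      simp only [Finset.mem_filter, Finset.mem_powerset] at hI
      have : ¬ I ⊆ T := fun h => hIT (mem_indSets.mpr ⟨h, hI.2⟩)
      obtain ⟨v, hvI, hvT⟩ := Finset.not_subset.mp this
      exact Finset.prod_eq_zero hvI (by simp [hz, hvT])
    rw [← Finset.sum_subset hsub hzero]
    apply Finset.sum_congr rfl
    intro I hI
    rw [mem_indSets] at hI
    have : ∏ v ∈ I, z v = ∏ v ∈ I, -p' v :=
      Finset.prod_congr rfl (fun v hv => by simp [hz, hI.1 hv])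
    rw [this, ← Finset.prod_const (b := (-1 : ℂ)), ← Finset.prod_mul_distrib]
    exact Finset.prod_congr rfl fun v _ => by ring
  intro h0
  refine hShearer z (fun v => ?_) (h1.trans h0)
  by_cases hv : v ∈ T <;> simp [hz, hv, hp' v, norm_nonneg]

lemma gq_cast {V : Type*} [DecidableEq V] (G : SimpleGraph V) [DecidableRel G.Adj]
    (q : V → ℝ) (T : Finset V) :
    ((gq ℝ G q T : ℝ) : ℂ) = gq ℂ G (fun v => (q v : ℂ)) T := by
  unfold gq
  push_cast
  rfl

lemma gqR_pos {V : Type*} [Fintype V] [DecidableEq V] (G : SimpleGraph V)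
    [DecidableRel G.Adj] (p : V → ℂ)
    (hShearer : ∀ z : V → ℂ, (∀ v, ‖z v‖ ≤ ‖p v‖) → ZG G z ≠ 0)
    (T : Finset V) :
    0 < gq ℝ G (fun v => ‖p v‖) T := by
  set f : ℝ → ℝ := fun t => gq ℝ G (fun v => t * ‖p v‖) T with hf
  have hcont : Continuous f := by
    rw [hf]
    unfold gq
    apply continuous_finset_sum
    intro I _
    exact continuous_const.mul (continuous_finset_prod _ (fun v _ =>
      (continuous_id.mul continuous_const)))
  have hne : ∀ t ∈ Set.Icc (0:ℝ) 1, f t ≠ 0 := by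
    intro t ht h0
    have hc : gq ℂ G (fun v => ((t * ‖p v‖ : ℝ) : ℂ)) T = 0 := by
      have h0' : gq ℝ G (fun v => t * ‖p v‖) T = 0 := h0
      rw [← gq_cast, h0', Complex.ofReal_zero]
    refine gq_ne_zero G p hShearer _ (fun v => ?_) T hc
    rw [Complex.norm_real, Real.norm_eq_abs, abs_of_nonneg (mul_nonneg ht.1 (norm_nonneg _))]
    calc t * ‖p v‖ ≤ 1 * ‖p v‖ := by
          apply mul_le_mul_of_nonneg_right ht.2 (norm_nonneg _)
      _ = ‖p v‖ := one_mul _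
  have hf0 : f 0 = 1 := by
    have h00 : f 0 = gq ℝ G (fun v => (0:ℝ) * ‖p v‖) T := rfl
    rw [h00]
    unfold gq
    rw [Finset.sum_eq_single ∅]
    · simp
    · intro I hI hne
      obtain ⟨v, hv⟩ := Finset.nonempty_iff_ne_empty.mpr hne
      rw [Finset.prod_eq_zero hv (by ring)]
      ring
    · intro h
      exact absurd (mem_indSets.mpr ⟨Finset.empty_subset T, by simp⟩) h
  have hf1 : 0 < f 1 := by
    by_contra hle
    push_neg at hle
    have hlt : f 1 < 0 := lt_of_le_of_ne hle (hne 1 (by norm_num))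
    have := intermediate_value_Icc' (by norm_num : (0:ℝ) ≤ 1) hcont.continuousOn
    have h0mem : (0:ℝ) ∈ Set.Icc (f 1) (f 0) := ⟨le_of_lt hlt, by rw [hf0]; norm_num⟩
    obtain ⟨t, ht, hft⟩ := this h0mem
    exact hne t ht hft
  have : f 1 = gq ℝ G (fun v => ‖p v‖) T := by
    have h11 : f 1 = gq ℝ G (fun v => (1:ℝ) * ‖p v‖) T := rfl
    rw [h11]
    congr 1
    funext v
    ring
  rwa [this] at hf1

lemma chain_mem {V : Type*} [Fintype V] [DecidableEq V] (G : SimpleGraph V)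
    [DecidableRel G.Adj] (S : Finset V) (u : V)
    (l : List V) (hnodup : l.Nodup) (hl : l.toFinset = S ∩ G.neighborFinset u)
    (i : Fin l.length) : l.get i ∈ (S.erase u) \ (l.take i).toFinset := by
  have h1 : l.get i ∈ l.toFinset := List.mem_toFinset.mpr (l.get_mem ..)
  rw [hl, Finset.mem_inter, SimpleGraph.mem_neighborFinset] at h1
  have hne : l.get i ≠ u := fun h => G.irrefl (h ▸ h1.2)
  have h2 : l.get i ∉ (l.take i).toFinset := by
    rw [List.mem_toFinset]
    intro hmem2
    have hd : l.get i ∈ l.drop (i : ℕ) := by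
      rw [← List.cons_get_drop_succ (l := l) (n := i)]
      exact List.mem_cons_self
    exact (List.disjoint_take_drop hnodup (le_refl (i : ℕ))) hmem2 hd
  exact Finset.mem_sdiff.mpr ⟨Finset.mem_erase.mpr ⟨hne, h1.1⟩, h2⟩

lemma rho_bounds {V : Type*} [Fintype V] [DecidableEq V] (G : SimpleGraph V)
    [DecidableRel G.Adj] (p : V → ℂ)
    (hShearer : ∀ z : V → ℂ, (∀ v, ‖z v‖ ≤ ‖p v‖) → ZG G z ≠ 0)
    (T : Finset V) (v : V) (hv : v ∈ T) :
    0 ≤ 1 - gq ℝ G (fun w => ‖p w‖) T / gq ℝ G (fun w => ‖p w‖) (T.erase v)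
    ∧ 1 - gq ℝ G (fun w => ‖p w‖) T / gq ℝ G (fun w => ‖p w‖) (T.erase v) < 1 := by
  have h1 := gqR_pos G p hShearer T
  have h2 := gqR_pos G p hShearer (T.erase v)
  have h3 := gqR_pos G p hShearer ((T.erase v) \ G.neighborFinset v)
  constructor
  · rw [sub_nonneg, div_le_one h2, gq_rec G _ T v hv]
    have h4 : 0 ≤ ‖p v‖ * gq ℝ G (fun w => ‖p w‖) ((T.erase v) \ G.neighborFinset v) :=
      mul_nonneg (norm_nonneg _) h3.le
    linarith
  · have : 0 < gq ℝ G (fun w => ‖p w‖) T / gq ℝ G (fun w => ‖p w‖) (T.erase v) :=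
      div_pos h1 h2
    linarith

lemma occ_le_rho {V : Type*} [Fintype V] [DecidableEq V] (G : SimpleGraph V)
    [DecidableRel G.Adj] (p : V → ℂ)
    (hShearer : ∀ z : V → ℂ, (∀ v, ‖z v‖ ≤ ‖p v‖) → ZG G z ≠ 0)
    (T : Finset V) :
    ∀ v ∈ T, ‖1 - gq ℂ G p T / gq ℂ G p (T.erase v)‖
      ≤ 1 - gq ℝ G (fun w => ‖p w‖) T / gq ℝ G (fun w => ‖p w‖) (T.erase v) := by
  induction T using Finset.strongInduction with
  | _ T ih =>
  intro v hv
  set pa : V → ℝ := fun w => ‖p w‖ with hpa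
  set l : List V := (T ∩ G.neighborFinset v).toList with hldef
  have hnodup : l.Nodup := Finset.nodup_toList _
  have hl : l.toFinset = T ∩ G.neighborFinset v := Finset.toList_toFinset _
  have hqC : ∀ T' : Finset V, T' ⊆ T → gq ℂ G p T' ≠ 0 :=
    fun T' _ => gq_ne_zero G p hShearer p (fun w => le_refl _) T'
  have hqR : ∀ T' : Finset V, T' ⊆ T → gq ℝ G pa T' ≠ 0 :=
    fun T' _ => (gqR_pos G p hShearer T').ne'
  have hc := gq_chain G p T v hv l hnodup hl hqC
  have hr := gq_chain G pa T v hv l hnodup hl hqR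
  rw [hc, hr, norm_mul, norm_prod]
  have hfac : ∀ i : Fin l.length,
      ‖gq ℂ G p (((T.erase v) \ (l.take i).toFinset).erase (l.get i))
          / gq ℂ G p ((T.erase v) \ (l.take i).toFinset)‖
        ≤ gq ℝ G pa (((T.erase v) \ (l.take i).toFinset).erase (l.get i))
          / gq ℝ G pa ((T.erase v) \ (l.take i).toFinset) := by
    intro i
    set Ti := (T.erase v) \ (l.take i).toFinset with hTi
    set vi := l.get i with hvi0
    have hvi : vi ∈ Ti := chain_mem G T v l hnodup hl i
    have hssub : Ti ⊂ T :=
      Finset.ssubset_of_subset_of_ssubset Finset.sdiff_subset (Finset.erase_ssubset hv)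
    have hih := ih Ti hssub vi hvi
    have hAR := gqR_pos G p hShearer Ti
    have hBR := gqR_pos G p hShearer (Ti.erase vi)
    have hA : gq ℂ G p Ti ≠ 0 := gq_ne_zero G p hShearer p (fun w => le_refl _) Ti
    have hB : gq ℂ G p (Ti.erase vi) ≠ 0 := gq_ne_zero G p hShearer p (fun w => le_refl _) _
    have habsA : 0 < ‖gq ℂ G p Ti‖ := norm_pos_iff.mpr hA
    have habsB : 0 < ‖gq ℂ G p (Ti.erase vi)‖ := norm_pos_iff.mpr hB
    have htri : 1 - ‖gq ℂ G p Ti / gq ℂ G p (Ti.erase vi)‖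
        ≤ ‖1 - gq ℂ G p Ti / gq ℂ G p (Ti.erase vi)‖ := by
      have h := norm_sub_norm_le (1 : ℂ) (gq ℂ G p Ti / gq ℂ G p (Ti.erase vi))
      simpa using h
    have hkey : gq ℝ G pa Ti / gq ℝ G pa (Ti.erase vi)
        ≤ ‖gq ℂ G p Ti‖ / ‖gq ℂ G p (Ti.erase vi)‖ := by
      have h2 := htri.trans hih
      rw [norm_div] at h2
      linarith
    rw [norm_div, div_le_div_iff₀ habsA hAR]
    rw [div_le_div_iff₀ hBR habsB] at hkey
    linarith
  have hprod : ∏ i : Fin l.length, ‖gq ℂ G p (((T.erase v) \ (l.take i).toFinset).erase (l.get i))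
          / gq ℂ G p ((T.erase v) \ (l.take i).toFinset)‖
        ≤ ∏ i : Fin l.length, gq ℝ G pa (((T.erase v) \ (l.take i).toFinset).erase (l.get i))
          / gq ℝ G pa ((T.erase v) \ (l.take i).toFinset) :=
    Finset.prod_le_prod (fun i _ => norm_nonneg _) (fun i _ => hfac i)
  exact mul_le_mul_of_nonneg_left hprod (norm_nonneg _)

lemma abs_prod_sub_prod_le {ι : Type*} [DecidableEq ι] (s : Finset ι) (f g : ι → ℂ) (M : ι → ℝ)
    (hM : ∀ i ∈ s, 0 ≤ M i) (hf : ∀ i ∈ s, ‖f i‖ ≤ M i)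
    (hg : ∀ i ∈ s, ‖g i‖ ≤ M i) :
    ‖∏ i ∈ s, f i - ∏ i ∈ s, g i‖
      ≤ ∑ i ∈ s, ‖f i - g i‖ * ∏ j ∈ s.erase i, M j := by
  induction s using Finset.induction_on with
  | empty => simp
  | @insert a s ha ih =>
    rw [Finset.prod_insert ha, Finset.prod_insert ha]
    have key : f a * ∏ i ∈ s, f i - g a * ∏ i ∈ s, g i
        = f a * (∏ i ∈ s, f i - ∏ i ∈ s, g i) + (f a - g a) * ∏ i ∈ s, g i := by ring
    rw [key]
    refine (norm_add_le _ _).trans ?_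
    rw [norm_mul, norm_mul]
    have hMa : 0 ≤ M a := hM a (Finset.mem_insert_self a s)
    have h1 : ‖f a‖ * ‖∏ i ∈ s, f i - ∏ i ∈ s, g i‖
        ≤ M a * ∑ i ∈ s, ‖f i - g i‖ * ∏ j ∈ s.erase i, M j := by
      apply mul_le_mul (hf a (Finset.mem_insert_self a s))
        (ih (fun i hi => hM i (Finset.mem_insert_of_mem hi))
            (fun i hi => hf i (Finset.mem_insert_of_mem hi))
            (fun i hi => hg i (Finset.mem_insert_of_mem hi)))
        (norm_nonneg _) hMa
    have h2 : ‖∏ i ∈ s, g i‖ ≤ ∏ j ∈ s, M j := by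
      rw [norm_prod]
      exact Finset.prod_le_prod (fun i _ => norm_nonneg _)
        (fun i hi => hg i (Finset.mem_insert_of_mem hi))
    have h3 : ‖f a - g a‖ * ‖∏ i ∈ s, g i‖
        ≤ ‖f a - g a‖ * ∏ j ∈ s, M j :=
      mul_le_mul_of_nonneg_left h2 (norm_nonneg _)
    have h4 : ∑ i ∈ insert a s, ‖f i - g i‖ * ∏ j ∈ (insert a s).erase i, M j
        = ‖f a - g a‖ * ∏ j ∈ s, M j
          + M a * ∑ i ∈ s, ‖f i - g i‖ * ∏ j ∈ s.erase i, M j := by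
      rw [Finset.sum_insert ha, Finset.erase_insert ha, Finset.mul_sum]
      congr 1
      apply Finset.sum_congr rfl
      intro i hi
      have hne : a ≠ i := fun h => ha (h ▸ hi)
      rw [Finset.erase_insert_of_ne hne,
        Finset.prod_insert (fun h => ha (Finset.mem_of_mem_erase h))]
      ring
    rw [h4]
    linarith

lemma final_bound {n : ℕ} (pu : ℂ) (r R : Fin n → ℂ) (q : Fin n → ℝ)
    (hq0 : ∀ i, 0 ≤ q i) (hq1 : ∀ i, q i < 1)
    (hr : ∀ i, ‖r i‖ ≤ q i) (hR : ∀ i, ‖R i‖ ≤ q i) :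
    ‖pu * ∏ i, (1 - r i)⁻¹ - pu * ∏ i, (1 - R i)⁻¹‖
      ≤ (‖pu‖ * ∏ i, (1 - q i)⁻¹) * ∑ i, ‖r i - R i‖ / (1 - q i) := by
  have hpos : ∀ i, 0 < 1 - q i := fun i => by linarith [hq1 i]
  have hner : ∀ i, 1 - q i ≤ ‖1 - r i‖ := by
    intro i
    have h := norm_sub_norm_le (1 : ℂ) (r i)
    simp only [norm_one] at h
    linarith [hr i]
  have hneR : ∀ i, 1 - q i ≤ ‖1 - R i‖ := by
    intro i
    have h := norm_sub_norm_le (1 : ℂ) (R i)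
    simp only [norm_one] at h
    linarith [hR i]
  have h1r : ∀ i, (1 : ℂ) - r i ≠ 0 := by
    intro i h
    have := hner i
    rw [h] at this
    simp at this
    linarith [hpos i]
  have h1R : ∀ i, (1 : ℂ) - R i ≠ 0 := by
    intro i h
    have := hneR i
    rw [h] at this
    simp at this
    linarith [hpos i]
  have habsF : ∀ i, ‖(1 - r i)⁻¹‖ ≤ (1 - q i)⁻¹ := by
    intro i
    rw [norm_inv]
    exact inv_anti₀ (hpos i) (hner i)
  have habsG : ∀ i, ‖(1 - R i)⁻¹‖ ≤ (1 - q i)⁻¹ := by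
    intro i
    rw [norm_inv]
    exact inv_anti₀ (hpos i) (hneR i)
  have hM0 : ∀ i, (0:ℝ) ≤ (1 - q i)⁻¹ := fun i => (inv_pos.mpr (hpos i)).le
  have main := abs_prod_sub_prod_le Finset.univ (fun i => (1 - r i)⁻¹) (fun i => (1 - R i)⁻¹)
    (fun i => (1 - q i)⁻¹) (fun i _ => hM0 i) (fun i _ => habsF i) (fun i _ => habsG i)
  rw [← mul_sub, norm_mul]
  have step : ∀ i : Fin n,
      ‖(1 - r i)⁻¹ - (1 - R i)⁻¹‖ * ∏ j ∈ Finset.univ.erase i, (1 - q j)⁻¹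
        ≤ (‖r i - R i‖ * (1 - q i)⁻¹) * ∏ j : Fin n, (1 - q j)⁻¹ := by
    intro i
    have hFG : (1 - r i)⁻¹ - (1 - R i)⁻¹ = (r i - R i) * ((1 - r i)⁻¹ * (1 - R i)⁻¹) := by
      field_simp [h1r i, h1R i]
      ring
    have habs : ‖(1 - r i)⁻¹ - (1 - R i)⁻¹‖
        ≤ ‖r i - R i‖ * ((1 - q i)⁻¹ * (1 - q i)⁻¹) := by
      rw [hFG, norm_mul, norm_mul]
      exact mul_le_mul_of_nonneg_left
        (mul_le_mul (habsF i) (habsG i) (norm_nonneg _) (hM0 i))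
        (norm_nonneg _)
    have hPe : (0:ℝ) ≤ ∏ j ∈ Finset.univ.erase i, (1 - q j)⁻¹ :=
      Finset.prod_nonneg (fun j _ => hM0 j)
    calc ‖(1 - r i)⁻¹ - (1 - R i)⁻¹‖ * ∏ j ∈ Finset.univ.erase i, (1 - q j)⁻¹
        ≤ (‖r i - R i‖ * ((1 - q i)⁻¹ * (1 - q i)⁻¹))
            * ∏ j ∈ Finset.univ.erase i, (1 - q j)⁻¹ := mul_le_mul_of_nonneg_right habs hPe
      _ = (‖r i - R i‖ * (1 - q i)⁻¹)
            * ((1 - q i)⁻¹ * ∏ j ∈ Finset.univ.erase i, (1 - q j)⁻¹) := by ring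
      _ = (‖r i - R i‖ * (1 - q i)⁻¹) * ∏ j : Fin n, (1 - q j)⁻¹ := by
          rw [← Finset.mul_prod_erase Finset.univ (fun j => (1 - q j)⁻¹) (Finset.mem_univ i)]
  calc ‖pu‖ * ‖∏ i, (1 - r i)⁻¹ - ∏ i, (1 - R i)⁻¹‖
      ≤ ‖pu‖ * ∑ i, ‖(1 - r i)⁻¹ - (1 - R i)⁻¹‖
          * ∏ j ∈ Finset.univ.erase i, (1 - q j)⁻¹ :=
        mul_le_mul_of_nonneg_left main (norm_nonneg _)
    _ ≤ ‖pu‖ * ∑ i, (‖r i - R i‖ * (1 - q i)⁻¹) * ∏ j : Fin n, (1 - q j)⁻¹ :=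
        mul_le_mul_of_nonneg_left (Finset.sum_le_sum (fun i _ => step i)) (norm_nonneg _)
    _ = (‖pu‖ * ∏ i, (1 - q i)⁻¹) * ∑ i, ‖r i - R i‖ / (1 - q i) := by
        rw [← Finset.sum_mul]
        have : ∑ i, ‖r i - R i‖ / (1 - q i)
            = ∑ i, ‖r i - R i‖ * (1 - q i)⁻¹ := by
          apply Finset.sum_congr rfl
          intro i _
          rw [div_eq_mul_inv]
        rw [this]
        ring

/-- error propagation: let `p` lie in the complex Shearer region, let
`(S,u)` be a node of the computation tree whose children are given by an ordering `l`
of the neighbours of `u` in `S`, let `R_c` be complex numbers with `|R_c| ≤ ϱ_c`, and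
let `R_{S,u} = p_u ∏_c (1 - R_c)⁻¹`.  Then
`|r_{S,u} - R_{S,u}| ≤ ϱ_{S,u} Σ_c |r_c - R_c|/(1 - ϱ_c)`. -/
theorem stmt12 {V : Type*} [Fintype V] [DecidableEq V] (G : SimpleGraph V)
    [DecidableRel G.Adj] (p : V → ℂ)
    (hShearer : ∀ z : V → ℂ, (∀ v, ‖z v‖ ≤ ‖p v‖) → ZG G z ≠ 0)
    (S : Finset V) (u : V) (hu : u ∈ S)
    (l : List V) (hnodup : l.Nodup) (hl : l.toFinset = S ∩ G.neighborFinset u)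
    (R : Fin l.length → ℂ)
    (hR : ∀ i : Fin l.length,
      ‖R i‖ ≤ rho G p ((S.erase u) \ (l.take i).toFinset) (l.get i))
    (RSu : ℂ) (hRSu : RSu = p u * ∏ i : Fin l.length, (1 - R i)⁻¹) :
    ‖occ G p S u - RSu‖
      ≤ rho G p S u *
          ∑ i : Fin l.length,
            ‖occ G p ((S.erase u) \ (l.take i).toFinset) (l.get i) - R i‖
              / (1 - rho G p ((S.erase u) \ (l.take i).toFinset) (l.get i)) := by
  have hocc : ∀ (T : Finset V) (v : V), occ G p T v
      = 1 - gq ℂ G p T / gq ℂ G p (T.erase v) := fun _ _ => rfl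
  have hrho : ∀ (T : Finset V) (v : V), rho G p T v
      = 1 - gq ℝ G (fun w => ‖p w‖) T
        / gq ℝ G (fun w => ‖p w‖) (T.erase v) := fun _ _ => rfl
  have hqC : ∀ T' : Finset V, T' ⊆ S → gq ℂ G p T' ≠ 0 :=
    fun T' _ => gq_ne_zero G p hShearer p (fun w => le_rfl) T'
  have hqR : ∀ T' : Finset V, T' ⊆ S → gq ℝ G (fun w => ‖p w‖) T' ≠ 0 :=
    fun T' _ => (gqR_pos G p hShearer T').ne'
  have hcC := gq_chain G p S u hu l hnodup hl hqC
  have hcR := gq_chain G (fun w => ‖p w‖) S u hu l hnodup hl hqR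
  have hoccS : occ G p S u = p u * ∏ i : Fin l.length,
      (1 - occ G p ((S.erase u) \ (l.take i).toFinset) (l.get i))⁻¹ := by
    rw [hocc, hcC]
    congr 1
    apply Finset.prod_congr rfl
    intro i _
    rw [hocc, sub_sub_cancel, inv_div]
  have hrhoS : rho G p S u = ‖p u‖ * ∏ i : Fin l.length,
      (1 - rho G p ((S.erase u) \ (l.take i).toFinset) (l.get i))⁻¹ := by
    rw [hrho, hcR]
    congr 1
    apply Finset.prod_congr rfl
    intro i _
    rw [hrho, sub_sub_cancel, inv_div]
  have hvi : ∀ i : Fin l.length, l.get i ∈ (S.erase u) \ (l.take i).toFinset :=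
    fun i => chain_mem G S u l hnodup hl i
  have hq01 : ∀ i : Fin l.length,
      0 ≤ rho G p ((S.erase u) \ (l.take i).toFinset) (l.get i)
      ∧ rho G p ((S.erase u) \ (l.take i).toFinset) (l.get i) < 1 := by
    intro i
    have hb := rho_bounds G p hShearer ((S.erase u) \ (l.take i).toFinset) (l.get i) (hvi i)
    constructor
    · rw [hrho]
      exact hb.1
    · rw [hrho]
      exact hb.2
  have hrle : ∀ i : Fin l.length,
      ‖occ G p ((S.erase u) \ (l.take i).toFinset) (l.get i)‖
        ≤ rho G p ((S.erase u) \ (l.take i).toFinset) (l.get i) := by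
    intro i
    rw [hocc, hrho]
    exact occ_le_rho G p hShearer _ (l.get i) (hvi i)
  rw [hoccS, hRSu, hrhoS]
  exact final_bound (p u)
    (fun i => occ G p ((S.erase u) \ (l.take i).toFinset) (l.get i)) R
    (fun i => rho G p ((S.erase u) \ (l.take i).toFinset) (l.get i))
    (fun i => (hq01 i).1) (fun i => (hq01 i).2) hrle hR
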